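/- Let R = q^{2A} with A ∈ ℕ, A ≥ 1, let a ∈ ℤ_q, and let T := {(x,y) ∈ ℚ_q² : |x + 2ay| ≤ R^{1/2}, |y| ≤ R}. Then every translate v + T (v ∈ ℚ_q²) is the union of exactly R^{1/2} pairwise disjoint squares of side length R^{1/2}, where a square of side length q^s is a set of the form {w ∈ ℚ_q² : |w − c| ≤ q^s} with c ∈ ℚ_q² and |(x,y)| := max(|x|,|y|). -/

import Mathlib

/-- With `R = q^{2A}`, `a ∈ ℤ_q` and `T = {(x,y) : |x + 2ay| ≤ R^{1/2}, |y| ≤ R}`, every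
translate `v + T` is the union of exactly `R^{1/2}` pairwise disjoint squares of side
length `R^{1/2}` (squares for the sup-norm `|(x,y)| = max(|x|,|y|)` on `ℚ_q²`). -/
theorem translate_union_of_squares (q : ℕ) [Fact q.Prime] (hq2 : q ≠ 2)
    (A : ℕ) (hA : 1 ≤ A) (a : ℚ_[q]) (ha : ‖a‖ ≤ 1) (v : ℚ_[q] × ℚ_[q]) :
    ∃ c : Fin (q ^ A) → ℚ_[q] × ℚ_[q],
      ({w : ℚ_[q] × ℚ_[q] |
          ‖(w - v).1 + 2 * a * (w - v).2‖ ≤ (q : ℝ) ^ (A : ℤ) ∧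
          ‖(w - v).2‖ ≤ (q : ℝ) ^ ((2 * A : ℕ) : ℤ)}
        = ⋃ i, {w : ℚ_[q] × ℚ_[q] | ‖w - c i‖ ≤ (q : ℝ) ^ (A : ℤ)}) ∧
      Pairwise fun i j =>
        Disjoint {w : ℚ_[q] × ℚ_[q] | ‖w - c i‖ ≤ (q : ℝ) ^ (A : ℤ)}
          {w : ℚ_[q] × ℚ_[q] | ‖w - c j‖ ≤ (q : ℝ) ^ (A : ℤ)} := by
  have hp := Fact.out (p := q.Prime)
  have hq0 : (q : ℝ) ≠ 0 := by exact_mod_cast hp.pos.ne'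
  have hq0' : (q : ℚ_[q]) ≠ 0 := by exact_mod_cast hp.pos.ne'
  have hq1 : (1 : ℝ) ≤ q := by exact_mod_cast hp.one_lt.le
  -- nonarchimedean inequalities
  have hna : ∀ x y : ℚ_[q], ‖x + y‖ ≤ max ‖x‖ ‖y‖ := Padic.nonarchimedean
  have hns : ∀ x y : ℚ_[q], ‖x - y‖ ≤ max ‖x‖ ‖y‖ := by
    intro x y
    rw [sub_eq_add_neg]
    exact (hna x (-y)).trans (by rw [norm_neg])
  -- the scale t = q^{-2A}
  set t : ℚ_[q] := (q : ℚ_[q]) ^ (-(2 * A : ℤ)) with ht_def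
  have ht : ‖t‖ = (q : ℝ) ^ ((2 * A : ℕ) : ℤ) := by
    rw [ht_def, Padic.norm_p_zpow, neg_neg]; push_cast; ring_nf
  have hqt : (q : ℚ_[q]) ^ ((2 * A : ℕ) : ℤ) * t = 1 := by
    rw [ht_def, ← zpow_add₀ hq0']
    push_cast
    simp
  -- ‖2‖ = 1
  have h2 : ‖(2 : ℚ_[q])‖ = 1 := by
    have h2' : ¬ ((q : ℤ) ∣ 2) := by
      intro h
      have h2n : q ∣ 2 := by exact_mod_cast h
      have := Nat.le_of_dvd (by norm_num) h2n
      have := hp.two_le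
      omega
    have := (Padic.norm_intCast_lt_one_iff (p := q) (k := 2)).not.mpr h2'
    have hle := Padic.norm_int_le_one (p := q) 2
    push_cast at this hle ⊢
    rcases lt_or_eq_of_le hle with h | h
    · exact absurd h this
    · exact h
  have h2a : ‖(2 : ℚ_[q]) * a‖ ≤ 1 := by
    rw [norm_mul, h2, one_mul]; exact ha
  have hAle : (q : ℝ) ^ (A : ℤ) ≤ (q : ℝ) ^ ((2 * A : ℕ) : ℤ) := by
    apply zpow_le_zpow_right₀ hq1
    exact_mod_cast Nat.le_mul_of_pos_left A (by norm_num : 0 < 2)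
  refine ⟨fun i => (v.1 - 2 * a * ((i : ℕ) * t), v.2 + (i : ℕ) * t), ?_, ?_⟩
  · ext w
    simp only [Set.mem_setOf_eq, Set.mem_iUnion]
    constructor
    · rintro ⟨hx, hy⟩
      have hz : ‖(w - v).2 * (q : ℚ_[q]) ^ ((2 * A : ℕ) : ℤ)‖ ≤ 1 := by
        rw [norm_mul, Padic.norm_p_zpow]
        calc ‖(w - v).2‖ * (q:ℝ) ^ (-((2*A : ℕ) : ℤ))
            ≤ (q:ℝ) ^ ((2*A : ℕ) : ℤ) * (q:ℝ) ^ (-((2*A : ℕ) : ℤ)) :=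
              mul_le_mul_of_nonneg_right hy (zpow_nonneg (by positivity) _)
          _ = 1 := by rw [← zpow_add₀ hq0]; simp
      set z : ℤ_[q] := ⟨(w - v).2 * (q : ℚ_[q]) ^ ((2 * A : ℕ) : ℤ), hz⟩ with hzdef
      have hzcoe : (z : ℚ_[q]) = (w - v).2 * (q : ℚ_[q]) ^ ((2 * A : ℕ) : ℤ) := rfl
      refine ⟨⟨z.appr A, PadicInt.appr_lt z A⟩, ?_⟩
      have hspec : ‖z - (z.appr A : ℤ_[q])‖ ≤ (q : ℝ) ^ (-(A:ℤ)) := by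
        rw [PadicInt.norm_le_pow_iff_mem_span_pow]
        exact PadicInt.appr_spec A z
      have hspec' : ‖(z : ℚ_[q]) - ((z.appr A : ℕ) : ℚ_[q])‖ ≤ (q : ℝ) ^ (-(A:ℤ)) := by
        have hc : ((z - (z.appr A : ℤ_[q]) : ℤ_[q]) : ℚ_[q])
            = (z : ℚ_[q]) - ((z.appr A : ℕ) : ℚ_[q]) := by push_cast; ring
        rw [← hc, PadicInt.padic_norm_e_of_padicInt]
        exact hspec
      have hkey : ‖(w - v).2 - ((z.appr A : ℕ) : ℚ_[q]) * t‖ ≤ (q : ℝ) ^ (A : ℤ) := by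
        have heq : (w - v).2 - ((z.appr A : ℕ) : ℚ_[q]) * t
            = ((z : ℚ_[q]) - ((z.appr A : ℕ) : ℚ_[q])) * t := by
          rw [hzcoe]
          linear_combination (-(w - v).2) * hqt
        rw [heq, norm_mul, ht]
        calc ‖(z : ℚ_[q]) - ((z.appr A : ℕ) : ℚ_[q])‖ * (q:ℝ) ^ ((2*A : ℕ) : ℤ)
            ≤ (q:ℝ) ^ (-(A:ℤ)) * (q:ℝ) ^ ((2*A : ℕ) : ℤ) :=
              mul_le_mul_of_nonneg_right hspec' (zpow_nonneg (by positivity) _)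
          _ = (q:ℝ) ^ (A : ℤ) := by
              rw [← zpow_add₀ hq0]; congr 1; push_cast; ring
      rw [Prod.norm_def, sup_le_iff]
      constructor
      · have heq1 : (w - (v.1 - 2 * a * (((z.appr A : ℕ) : ℚ_[q]) * t),
              v.2 + ((z.appr A : ℕ) : ℚ_[q]) * t)).1
            = ((w - v).1 + 2 * a * (w - v).2)
              - 2 * a * ((w - v).2 - ((z.appr A : ℕ) : ℚ_[q]) * t) := by
          simp only [Prod.sub_def]
          ring
        rw [heq1]
        refine le_trans (hns _ _) (max_le hx ?_)
        rw [show (2:ℚ_[q]) * a * ((w - v).2 - ((z.appr A : ℕ) : ℚ_[q]) * t)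
          = (2 * a) * ((w - v).2 - ((z.appr A : ℕ) : ℚ_[q]) * t) from rfl, norm_mul]
        calc ‖(2:ℚ_[q]) * a‖ * ‖(w - v).2 - ((z.appr A : ℕ) : ℚ_[q]) * t‖
            ≤ 1 * ((q:ℝ) ^ (A:ℤ)) :=
              mul_le_mul h2a hkey (norm_nonneg _) zero_le_one
          _ = (q:ℝ) ^ (A:ℤ) := one_mul _
      · have heq2 : (w - (v.1 - 2 * a * (((z.appr A : ℕ) : ℚ_[q]) * t),
              v.2 + ((z.appr A : ℕ) : ℚ_[q]) * t)).2
            = (w - v).2 - ((z.appr A : ℕ) : ℚ_[q]) * t := by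
          simp only [Prod.sub_def]; ring
        rw [heq2]
        exact hkey
    · rintro ⟨i, hi⟩
      rw [Prod.norm_def, sup_le_iff] at hi
      obtain ⟨hi1, hi2⟩ := hi
      have heq2 : (w - (v.1 - 2 * a * ((i:ℕ) * t), v.2 + (i:ℕ) * t)).2
          = (w - v).2 - (i:ℕ) * t := by simp only [Prod.sub_def]; ring
      rw [heq2] at hi2
      have hit : ‖((i:ℕ) : ℚ_[q]) * t‖ ≤ (q:ℝ) ^ ((2*A : ℕ) : ℤ) := by
        rw [norm_mul, ht]
        calc ‖((i:ℕ) : ℚ_[q])‖ * (q:ℝ) ^ ((2*A : ℕ) : ℤ)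
            ≤ 1 * (q:ℝ) ^ ((2*A : ℕ) : ℤ) := by
              apply mul_le_mul_of_nonneg_right _ (zpow_nonneg (by positivity) _)
              exact_mod_cast Padic.norm_int_le_one (p := q) (i : ℕ)
          _ = _ := one_mul _
      constructor
      · have heq1 : (w - v).1 + 2 * a * (w - v).2
            = (w - (v.1 - 2 * a * ((i:ℕ) * t), v.2 + (i:ℕ) * t)).1
              + 2 * a * ((w - v).2 - (i:ℕ) * t) := by
          simp only [Prod.sub_def]; ring
        rw [heq1]
        refine le_trans (hna _ _) (max_le hi1 ?_)
        rw [show (2:ℚ_[q]) * a * ((w - v).2 - ((i:ℕ):ℚ_[q]) * t)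
          = (2 * a) * ((w - v).2 - ((i:ℕ):ℚ_[q]) * t) from rfl, norm_mul]
        calc ‖(2:ℚ_[q]) * a‖ * ‖(w - v).2 - (i:ℕ) * t‖
            ≤ 1 * ((q:ℝ) ^ (A:ℤ)) :=
              mul_le_mul h2a hi2 (norm_nonneg _) zero_le_one
          _ = (q:ℝ) ^ (A:ℤ) := one_mul _
      · have hsplit : (w - v).2 = ((w - v).2 - (i:ℕ) * t) + (i:ℕ) * t := by ring
        rw [hsplit]
        exact le_trans (hna _ _) (max_le (hi2.trans hAle) hit)
  · intro i j hij
    rw [Set.disjoint_left]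
    rintro w hwi hwj
    apply hij
    simp only [Set.mem_setOf_eq, Prod.norm_def, sup_le_iff] at hwi hwj
    have hdiff : ‖((i:ℕ) : ℚ_[q]) * t - ((j:ℕ) : ℚ_[q]) * t‖ ≤ (q:ℝ) ^ (A:ℤ) := by
      have heq : ((i:ℕ) : ℚ_[q]) * t - ((j:ℕ) : ℚ_[q]) * t
          = (w - (v.1 - 2 * a * ((j:ℕ) * t), v.2 + (j:ℕ) * t)).2
            - (w - (v.1 - 2 * a * ((i:ℕ) * t), v.2 + (i:ℕ) * t)).2 := by
        simp only [Prod.sub_def]; ring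
      rw [heq]
      exact le_trans (hns _ _) (max_le hwj.2 hwi.2)
    have hint : ‖(((((i:ℕ) : ℤ) - ((j:ℕ) : ℤ)) : ℤ) : ℚ_[q])‖ ≤ (q:ℝ) ^ (-(A:ℤ)) := by
      have heq : (((((i:ℕ) : ℤ) - ((j:ℕ) : ℤ)) : ℤ) : ℚ_[q])
          = (((i:ℕ) : ℚ_[q]) * t - ((j:ℕ) : ℚ_[q]) * t)
              * (q : ℚ_[q]) ^ ((2*A : ℕ) : ℤ) := by
        have hqt' : (q : ℚ_[q]) ^ ((2:ℤ) * (A:ℤ)) * t = 1 := by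
          rw [← hqt]; norm_cast
        push_cast
        linear_combination (((j:ℕ) : ℚ_[q]) - ((i:ℕ) : ℚ_[q])) * hqt'
      rw [heq, norm_mul, Padic.norm_p_zpow]
      calc ‖((i:ℕ) : ℚ_[q]) * t - ((j:ℕ) : ℚ_[q]) * t‖ * (q:ℝ) ^ (-((2*A:ℕ):ℤ))
          ≤ (q:ℝ) ^ (A:ℤ) * (q:ℝ) ^ (-((2*A:ℕ):ℤ)) :=
            mul_le_mul_of_nonneg_right hdiff (zpow_nonneg (by positivity) _)
        _ = (q:ℝ) ^ (-(A:ℤ)) := by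
            rw [← zpow_add₀ hq0]; congr 1; push_cast; ring
    rw [Padic.norm_int_le_pow_iff_dvd] at hint
    have hcast : ((q:ℤ))^A = ((q^A : ℕ) : ℤ) := by push_cast; ring
    have h1 := i.isLt
    have h2' := j.isLt
    have habs : |(((i:ℕ) : ℤ) - ((j:ℕ) : ℤ))| < (q:ℤ) ^ A := by
      rw [hcast, abs_sub_lt_iff]
      omega
    have hz0 := Int.eq_zero_of_abs_lt_dvd hint habs
    exact Fin.ext (by omega)
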